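/- arXiv:2202.07715 — 13 statements merged into one kernel-verified Lean document; each statement's English description precedes it below -/
import Mathlib

section
/- For all positive integers t and u and every natural number n, the number of gridded permutations of size n all of whose cells lie in {0,…,t−1}×{0,…,u−1} equals n! · C(t+n−1, t−1) · C(u+n−1, u−1), where C denotes the binomial coefficient. -/
/-- A (raw) gridded permutation: a permutation of `Fin n` (recording the size-`n`
underlying permutation) together with a cell in `ℕ × ℕ` for each index. -/
structure GP where
  n : ℕ
  perm : Equiv.Perm (Fin n)
  cells : Fin n → ℕ × ℕ

/-- The consistency condition for a gridded permutation: cells are weakly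
increasing in the x-coordinate along positions, and weakly increasing in the
y-coordinate along values. -/
def GP.Consistent (g : GP) : Prop :=
  (∀ i j : Fin g.n, i < j → (g.cells i).1 ≤ (g.cells j).1) ∧
  (∀ i j : Fin g.n, g.perm i < g.perm j → (g.cells i).2 ≤ (g.cells j).2)

/-- `g.Contains h` means `h ≤ g`: there is a strictly increasing choice of
indices of `g` whose values are order-isomorphic to `h` and whose cells agree
with those of `h`. -/
def GP.Contains (g h : GP) : Prop :=
  ∃ f : Fin h.n → Fin g.n, StrictMono f ∧
    (∀ i j : Fin h.n, (h.perm i < h.perm j ↔ g.perm (f i) < g.perm (f j))) ∧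
    ∀ i : Fin h.n, g.cells (f i) = h.cells i

/-- `𝒢^(t,u)`: the set of (consistent) gridded permutations all of whose cells lie in
`{0,…,t−1} × {0,…,u−1}`. -/
def Ggrid (t u : ℕ) : Set GP :=
  {g | g.Consistent ∧ ∀ i : Fin g.n, (g.cells i).1 < t ∧ (g.cells i).2 < u}

/-- `Grid` of the tiling `((t,u), O, R)`: the gridded permutations in `𝒢^(t,u)` avoiding
every obstruction in `O` and containing at least one element of every requirement
list in `R`. -/
def GridSet (t u : ℕ) (O : Set GP) (R : List (Set GP)) : Set GP :=
  {g | g ∈ Ggrid t u ∧ (∀ o ∈ O, ¬ g.Contains o) ∧ ∀ Ri ∈ R, ∃ x ∈ Ri, g.Contains x}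

lemma strictMono_gap {n m : ℕ} {g : Fin n → Fin m} (hg : StrictMono g) :
    ∀ (d : ℕ) (i j : Fin n), (j : ℕ) = (i : ℕ) + d → (g i : ℕ) + d ≤ g j := by
  intro d
  induction d with
  | zero =>
    intro i j hij
    have : i = j := Fin.ext (by omega)
    subst this; simp
  | succ d ih =>
    intro i j hij
    have hj' : (i : ℕ) + d < n := by have := j.isLt; omega
    have h1 := ih i ⟨(i : ℕ) + d, hj'⟩ rfl
    have h2 : g ⟨(i : ℕ) + d, hj'⟩ < g j := hg (by simp [Fin.lt_def]; omega)
    have h2' := (Fin.lt_def).mp h2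
    omega

/-- Strictly monotone maps `Fin n → Fin m` correspond to `n`-element subsets. -/
noncomputable def strictMonoEquivFinset (n m : ℕ) :
    {g : Fin n → Fin m // StrictMono g} ≃ {s : Finset (Fin m) // s.card = n} where
  toFun g := ⟨Finset.univ.image g.1, by
    rw [Finset.card_image_of_injective _ g.2.injective, Finset.card_univ, Fintype.card_fin]⟩
  invFun s := ⟨(s.1.orderEmbOfFin s.2 : Fin n → Fin m), (s.1.orderEmbOfFin s.2).strictMono⟩
  left_inv := by
    rintro ⟨g, hg⟩
    apply Subtype.ext
    exact (Finset.orderEmbOfFin_unique _ (fun x => Finset.mem_image_of_mem _ (Finset.mem_univ x)) hg).symm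
  right_inv := by
    rintro ⟨s, hs⟩
    apply Subtype.ext
    apply Finset.coe_injective
    rw [Finset.coe_image, Finset.coe_univ, Set.image_univ]
    exact Finset.range_orderEmbOfFin s hs

/-- Monotone maps `Fin n → Fin t` correspond to strictly monotone maps
`Fin n → Fin (t - 1 + n)` (stars and bars), for `t ≥ 1`. -/
noncomputable def monoEquivStrictMono (n t : ℕ) (ht : 0 < t) :
    {f : Fin n → Fin t // Monotone f} ≃ {g : Fin n → Fin (t - 1 + n) // StrictMono g} where
  toFun f := ⟨fun i => ⟨(f.1 i : ℕ) + i, by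
      have h1 := (f.1 i).isLt; have h2 := i.isLt; omega⟩, by
    intro i j hij
    have h1 : f.1 i ≤ f.1 j := f.2 hij.le
    have h2 := Fin.le_def.mp h1
    have h3 := Fin.lt_def.mp hij
    simp only [Fin.lt_def]
    omega⟩
  invFun g := ⟨fun i => ⟨(g.1 i : ℕ) - i, by
      -- g i ≤ t - 1 + i, using the gap from i to the last index
      have hn : 0 < n := i.pos
      have hlast : (i : ℕ) ≤ n - 1 := by have := i.isLt; omega
      have hgap := strictMono_gap g.2 ((n - 1) - (i : ℕ)) i ⟨n - 1, by omega⟩ (by simp; omega)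
      have := (g.1 ⟨n - 1, by omega⟩).isLt
      omega⟩, by
    intro i j hij
    rcases eq_or_lt_of_le hij with rfl | hlt
    · exact le_refl _
    · have h3 := Fin.lt_def.mp hlt
      have hgap := strictMono_gap g.2 ((j : ℕ) - (i : ℕ)) i j (by omega)
      simp only [Fin.le_def]
      omega⟩
  left_inv := by
    rintro ⟨f, hf⟩
    apply Subtype.ext
    funext i
    apply Fin.ext
    simp
  right_inv := by
    rintro ⟨g, hg⟩
    apply Subtype.ext
    funext i
    apply Fin.ext
    have hge : (i : ℕ) ≤ g i := by
      have hn : 0 < n := i.pos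
      have hgap := strictMono_gap hg (i : ℕ) ⟨0, hn⟩ i (by simp)
      omega
    simp
    omega

lemma card_monotone (n t : ℕ) (ht : 0 < t) :
    Nat.card {f : Fin n → Fin t // Monotone f} = (t + n - 1).choose (t - 1) := by
  rw [Nat.card_congr ((monoEquivStrictMono n t ht).trans (strictMonoEquivFinset n _)),
    Nat.card_eq_fintype_card, Fintype.card_finset_len, Fintype.card_fin]
  have h1 : t - 1 + n = t + n - 1 := by omega
  have h2 := Nat.choose_symm (show t - 1 ≤ t - 1 + n by omega) (n := t - 1 + n)
  rw [show t - 1 + n - (t - 1) = n by omega] at h2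
  rw [← h1, h2]

/-- The number of gridded permutations of size `n` in `𝒢^(t,u)` is
`n! · C(t+n−1, t−1) · C(u+n−1, u−1)`. -/
theorem count_gridded_permutations (t u n : ℕ) (ht : 0 < t) (hu : 0 < u) :
    Nat.card {g : GP // g ∈ Ggrid t u ∧ g.n = n} =
      n.factorial * (t + n - 1).choose (t - 1) * (u + n - 1).choose (u - 1) := by
  classical
  set F : Equiv.Perm (Fin n) × {f : Fin n → Fin t // Monotone f} ×
      {h : Fin n → Fin u // Monotone h} → {g : GP // g ∈ Ggrid t u ∧ g.n = n} :=
    fun x => ⟨⟨n, x.1, fun i => ((x.2.1.1 i : ℕ), (x.2.2.1 (x.1 i) : ℕ))⟩, by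
      refine ⟨⟨⟨fun i j hij => ?_, fun i j hij => ?_⟩, fun i => ⟨Fin.isLt _, Fin.isLt _⟩⟩, rfl⟩
      · exact Fin.le_def.mp (x.2.1.2 hij.le)
      · exact Fin.le_def.mp (x.2.2.2 hij.le)⟩ with hF
  have hbij : Function.Bijective F := by
    constructor
    · rintro ⟨π, f, h⟩ ⟨π', f', h'⟩ heq
      have hgp : (⟨n, π, fun i => ((f.1 i : ℕ), (h.1 (π i) : ℕ))⟩ : GP) =
          ⟨n, π', fun i => ((f'.1 i : ℕ), (h'.1 (π' i) : ℕ))⟩ := congrArg Subtype.val heq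
      rw [GP.mk.injEq] at hgp
      obtain ⟨-, hπ, hc⟩ := hgp
      have hπ' : π = π' := eq_of_heq hπ
      have hc' := eq_of_heq hc
      subst hπ'
      refine Prod.ext rfl (Prod.ext ?_ ?_)
      · apply Subtype.ext; funext i
        have := congrFun hc' i
        exact Fin.ext (congrArg Prod.fst this)
      · apply Subtype.ext; funext k
        have := congrFun hc' (π.symm k)
        have := congrArg Prod.snd this
        simpa using Fin.ext this
    · rintro ⟨⟨m, π, c⟩, ⟨⟨hx, hy⟩, hb⟩, hn⟩
      dsimp at hx hy hb hn
      subst hn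
      refine ⟨⟨π, ⟨fun i => ⟨(c i).1, (hb i).1⟩, ?_⟩,
        ⟨fun k => ⟨(c (π.symm k)).2, (hb _).2⟩, ?_⟩⟩, ?_⟩
      · intro i j hij
        rcases eq_or_lt_of_le hij with rfl | hlt
        · exact le_refl _
        · exact Fin.le_def.mpr (hx i j hlt)
      · intro k l hkl
        rcases eq_or_lt_of_le hkl with rfl | hlt
        · exact le_refl _
        · refine Fin.le_def.mpr (hy _ _ ?_)
          rwa [Equiv.apply_symm_apply, Equiv.apply_symm_apply]
      · apply Subtype.ext
        simp only [hF]
        congr 1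
        funext i
        simp
  rw [← Nat.card_eq_of_bijective F hbij, Nat.card_prod, Nat.card_prod,
    Nat.card_eq_fintype_card (α := Equiv.Perm (Fin n)), Fintype.card_perm, Fintype.card_fin,
    card_monotone n t ht, card_monotone n u hu, mul_assoc]
end

section
/- Fix positive integers t and u and let H be a set of gridded permutations contained in 𝒢^(t,u). Then H is an interval of the containment order on 𝒢^(t,u) (i.e., whenever a, c ∈ H, b ∈ 𝒢^(t,u) and a ≤ b ≤ c, also b ∈ H) if and only if there exists a tiling 𝒯 of dimensions (t,u) with Grid(𝒯) = H. -/

lemma GP.contains_refl (g : GP) : g.Contains g :=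
  ⟨id, strictMono_id, fun _ _ => Iff.rfl, fun _ => rfl⟩

lemma GP.contains_trans {g h k : GP} (hg : g.Contains h) (hk : h.Contains k) :
    g.Contains k := by
  obtain ⟨f, hf, hiff, hc⟩ := hg
  obtain ⟨e, he, eiff, ec⟩ := hk
  exact ⟨f ∘ e, hf.comp he,
    fun i j => (eiff i j).trans (hiff (e i) (e j)),
    fun i => (hc (e i)).trans (ec i)⟩

/-- A subset `H` of `𝒢^(t,u)` is an interval of the containment order if and only if
there is a tiling `((t,u), O, R)` with `Grid = H`. -/
theorem interval_iff_tiling (t u : ℕ) (ht : 0 < t) (hu : 0 < u)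
    (H : Set GP) (hH : H ⊆ Ggrid t u) :
    (∀ a ∈ H, ∀ c ∈ H, ∀ b ∈ Ggrid t u, b.Contains a → c.Contains b → b ∈ H) ↔
      ∃ (O : Set GP) (R : List (Set GP)),
        O ⊆ Ggrid t u ∧ (∀ Ri ∈ R, Ri ⊆ Ggrid t u) ∧ GridSet t u O R = H := by
  constructor
  · intro hint
    refine ⟨{g | g ∈ Ggrid t u ∧ g ∉ H ∧ ∃ a ∈ H, g.Contains a}, [H],
      fun g hg => hg.1, ?_, ?_⟩
    · intro Ri hRi
      simp only [List.mem_singleton] at hRi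
      exact hRi ▸ hH
    · ext g
      constructor
      · rintro ⟨hgG, hav, hreq⟩
        obtain ⟨a, haH, hga⟩ := hreq H (List.mem_singleton_self H)
        by_contra hgH
        exact hav g ⟨hgG, hgH, a, haH, hga⟩ (GP.contains_refl g)
      · intro hgH
        refine ⟨hH hgH, ?_, ?_⟩
        · rintro o ⟨hoG, hoH, a, haH, hoa⟩ hgo
          exact hoH (hint a haH g hgH o hoG hoa hgo)
        · intro Ri hRi
          simp only [List.mem_singleton] at hRi
          exact ⟨g, hRi ▸ hgH, GP.contains_refl g⟩
  · rintro ⟨O, R, hO, hR, rfl⟩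
    rintro a ⟨haG, hav, hreq⟩ c ⟨hcG, hcav, hcreq⟩ b hbG hba hcb
    refine ⟨hbG, ?_, ?_⟩
    · intro o hoO hbo
      exact hcav o hoO (GP.contains_trans hcb hbo)
    · intro Ri hRi
      obtain ⟨x, hx, hax⟩ := hreq Ri hRi
      exact ⟨x, hx, GP.contains_trans hba hax⟩
end

section
/- Let 𝒯 = ((t,u), 𝒪, {ℛ_1, …, ℛ_k}) be a tiling in which every requirement list ℛ_i is finite and nonempty, let ℓ_i be the maximum size of a gridded permutation in ℛ_i, and let L = ℓ_1 + ⋯ + ℓ_k. If Grid(𝒯) is nonempty, then Grid(𝒯) contains a gridded permutation whose size is at most L. -/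
lemma exists_restrict (g : GP) (S : Finset (Fin g.n)) :
    ∃ (h : GP) (e : Fin h.n → Fin g.n), h.n = S.card ∧ StrictMono e ∧
      (∀ x ∈ S, ∃ i, e i = x) ∧
      (∀ i j, h.perm i < h.perm j ↔ g.perm (e i) < g.perm (e j)) ∧
      (∀ i, h.cells i = g.cells (e i)) := by
  classical
  set m := S.card with hm
  let eo : Fin m ≃o S := S.orderIsoOfFin rfl
  let v : Fin m → Fin g.n := fun i => g.perm (eo i)
  have hv : Function.Injective v := by
    intro i j hij
    exact eo.injective (Subtype.coe_injective (g.perm.injective hij))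
  let T : Finset (Fin g.n) := Finset.image v Finset.univ
  have hT : T.card = m := by
    rw [Finset.card_image_of_injective _ hv, Finset.card_univ, Fintype.card_fin]
  let w : Fin m ≃o T := T.orderIsoOfFin hT
  have hvT : ∀ i, v i ∈ T := fun i => Finset.mem_image_of_mem _ (Finset.mem_univ i)
  let σf : Fin m → Fin m := fun i => w.symm ⟨v i, hvT i⟩
  have hσiff : ∀ i j, σf i < σf j ↔ v i < v j := by
    intro i j
    simp [σf, w.symm.lt_iff_lt, Subtype.mk_lt_mk]
  have hσinj : Function.Injective σf := by
    intro i j hij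
    exact hv (congrArg Subtype.val (w.symm.injective hij))
  let σ : Equiv.Perm (Fin m) := Equiv.ofBijective σf (Finite.injective_iff_bijective.mp hσinj)
  refine ⟨⟨m, σ, fun i => g.cells (eo i)⟩, fun i => (eo i : Fin g.n), rfl, ?_, ?_, ?_, ?_⟩
  · intro i j hij
    exact (eo.lt_iff_lt.mpr hij)
  · intro x hx
    exact ⟨eo.symm ⟨x, hx⟩, by simp⟩
  · intro i j
    exact hσiff i j
  · intro i; rfl

lemma list_sum_eq_sum_fin {α M : Type*} [AddCommMonoid M] (F : α → M) (R : List α) :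
    ∑ i : Fin R.length, F (R.get i) = (R.map F).sum := by
  induction R with
  | nil => simp
  | cons a l ih => simp [Fin.sum_univ_succ, ih]


/-- If every requirement list of a tiling is finite and nonempty and `Grid(𝒯)` is
nonempty, then `Grid(𝒯)` contains a gridded permutation of size at most
`L = ℓ₁ + ⋯ + ℓ_k`, where `ℓᵢ` is the largest size of a gridded permutation in the
`i`-th requirement list. -/
theorem grid_nonempty_has_small_element (t u : ℕ) (O : Set GP) (R : List (Set GP))
    (hfin : ∀ Ri ∈ R, Ri.Finite) (hne : ∀ Ri ∈ R, Ri.Nonempty)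
    (hGrid : (GridSet t u O R).Nonempty) :
    ∃ g ∈ GridSet t u O R, g.n ≤ (R.map fun Ri => sSup (GP.n '' Ri)).sum := by
  classical
  obtain ⟨g, ⟨hgC, hgB⟩, hgO, hgR⟩ := hGrid
  have hx : ∀ i : Fin R.length, ∃ x, x ∈ R.get i ∧ g.Contains x := by
    intro i
    obtain ⟨x, hx1, hx2⟩ := hgR (R.get i) (R.get_mem i)
    exact ⟨x, hx1, hx2⟩
  choose x hxm f hf1 hf2 hf3 using hx
  set S : Finset (Fin g.n) :=
    Finset.univ.biUnion (fun i : Fin R.length => Finset.image (f i) Finset.univ) with hS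
  obtain ⟨h, e, hhn, hemono, hesurj, hperm, hcells⟩ := exists_restrict g S
  refine ⟨h, ⟨⟨?_, ?_⟩, ?_, ?_⟩, ?_⟩
  · constructor
    · intro i j hij
      rw [hcells i, hcells j]
      exact hgC.1 _ _ (hemono hij)
    · intro i j hij
      rw [hcells i, hcells j]
      exact hgC.2 _ _ ((hperm i j).mp hij)
  · intro i
    rw [hcells i]
    exact hgB (e i)
  · -- avoids obstructions
    intro o ho hcon
    obtain ⟨p, hp1, hp2, hp3⟩ := hcon
    refine hgO o ho ⟨e ∘ p, hemono.comp hp1, ?_, ?_⟩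
    · intro i j
      exact (hp2 i j).trans (hperm (p i) (p j))
    · intro i
      simpa [hcells (p i)] using hp3 i
  · -- requirements
    intro Ri hRi
    obtain ⟨i, hi⟩ := List.get_of_mem hRi
    refine ⟨x i, hi ▸ hxm i, ?_⟩
    have hmemS : ∀ j : Fin (x i).n, f i j ∈ S := by
      intro j
      exact Finset.mem_biUnion.mpr ⟨i, Finset.mem_univ i,
        Finset.mem_image_of_mem _ (Finset.mem_univ j)⟩
    choose k hk using fun j => hesurj (f i j) (hmemS j)
    refine ⟨k, ?_, ?_, ?_⟩
    · intro a b hab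
      have : e (k a) < e (k b) := by rw [hk a, hk b]; exact hf1 i hab
      exact hemono.lt_iff_lt.mp this
    · intro a b
      rw [hf2 i a b, ← hk a, ← hk b]
      exact (hperm (k a) (k b)).symm
    · intro a
      rw [hcells (k a), hk a]
      exact hf3 i a
  · -- size bound
    rw [hhn]
    calc S.card ≤ ∑ i : Fin R.length, (Finset.image (f i) Finset.univ).card :=
          Finset.card_biUnion_le
      _ ≤ ∑ i : Fin R.length, (x i).n := by
          refine Finset.sum_le_sum fun i _ => ?_
          calc (Finset.image (f i) Finset.univ).card ≤ (Finset.univ : Finset (Fin (x i).n)).card :=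
                Finset.card_image_le
            _ = (x i).n := by simp
      _ ≤ ∑ i : Fin R.length, sSup (GP.n '' R.get i) := by
          refine Finset.sum_le_sum fun i _ => ?_
          refine le_csSup ?_ (Set.mem_image_of_mem GP.n (hxm i))
          exact ((hfin (R.get i) (R.get_mem i)).image GP.n).bddAbove
      _ = (R.map fun Ri => sSup (GP.n '' Ri)).sum := list_sum_eq_sum_fin (fun Ri => sSup (GP.n '' Ri)) R
end

section
/- Let U be a finite set of combinatorial rules over a type Σ of symbols. A rule R ∈ U belongs to some combinatorial specification S with S ⊆ U if and only if R belongs to some closed subset T ⊆ U. Consequently, the union of all combinatorial specifications contained in U equals the union of all closed subsets of U (which is the largest closed subset of U, the output of the Combinatorial Specification Searcher algorithm). -/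
/-- A combinatorial rule over a type `α` of symbols: a left-hand side together with a
list of right-hand-side symbols. -/
abbrev CombRule (α : Type*) := α × List α

/-- A set of rules is a combinatorial specification if for every rule in the set and
every symbol on its right-hand side there is exactly one rule in the set with that
symbol as its left-hand side. -/
def IsSpecification {α : Type*} (S : Set (CombRule α)) : Prop :=
  ∀ r ∈ S, ∀ b ∈ r.2, ∃! r' : CombRule α, r' ∈ S ∧ r'.1 = b

/-- A set of rules is closed if for every rule in the set and every symbol on its
right-hand side there is at least one rule in the set with that symbol as its
left-hand side. -/
def IsClosedRuleSet {α : Type*} (S : Set (CombRule α)) : Prop :=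
  ∀ r ∈ S, ∀ b ∈ r.2, ∃ r' ∈ S, r'.1 = b

/-- Symbols reachable from `a` by repeatedly applying the rule-choosing function `h`. -/
inductive ReachSym {α : Type*} (h : α → CombRule α) : α → α → Prop
  | base (a : α) : ReachSym h a a
  | step {a b c : α} : ReachSym h a b → c ∈ (h b).2 → ReachSym h a c

theorem closed_mem_spec {α : Type*} {T : Set (CombRule α)} (hcl : IsClosedRuleSet T)
    {R : CombRule α} (hRT : R ∈ T) :
    ∃ S, S ⊆ T ∧ IsSpecification S ∧ R ∈ S := by
  classical
  set h : α → CombRule α := fun b =>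
    if b = R.1 then R else if hb' : ∃ r ∈ T, r.1 = b then hb'.choose else (b, []) with hh
  have hfst : ∀ b, (h b).1 = b := by
    intro b
    simp only [hh]
    split
    · next e => exact e.symm
    · split
      · rename_i hb'
        exact hb'.choose_spec.2
      · rfl
  have hmem : ∀ b, ReachSym h R.1 b → h b ∈ T := by
    intro b hb
    induction hb with
    | base => simp only [hh, if_pos rfl]; exact hRT
    | step hab hc ih =>
      rename_i b c
      have hex : ∃ r ∈ T, r.1 = c := hcl _ ih _ hc
      simp only [hh]
      split
      · exact hRT
      · exact hex.choose_spec.1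
  refine ⟨h '' {b | ReachSym h R.1 b}, ?_, ?_, ?_⟩
  · rintro r ⟨b, hb, rfl⟩; exact hmem b hb
  · rintro r ⟨b, hb, rfl⟩ c hc
    refine ⟨h c, ⟨⟨c, ReachSym.step hb hc, rfl⟩, hfst c⟩, ?_⟩
    rintro r' ⟨⟨c', hc', rfl⟩, h1⟩
    rw [hfst c'] at h1; rw [h1]
  · refine ⟨R.1, ReachSym.base _, ?_⟩
    simp only [hh, if_pos rfl]

/-- For a finite set `U` of combinatorial rules, a rule of `U` belongs to some
combinatorial specification contained in `U` if and only if it belongs to some closed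
subset of `U`; consequently the union of all specifications contained in `U` equals the
union of all closed subsets of `U`. -/
theorem mem_spec_iff_mem_closed {α : Type*} (U : Set (CombRule α)) (hU : U.Finite) :
    (∀ R ∈ U,
      ((∃ S, S ⊆ U ∧ IsSpecification S ∧ R ∈ S) ↔
        ∃ T, T ⊆ U ∧ IsClosedRuleSet T ∧ R ∈ T)) ∧
    ⋃₀ {S | S ⊆ U ∧ IsSpecification S} = ⋃₀ {T | T ⊆ U ∧ IsClosedRuleSet T} := by
  have key : ∀ R, ((∃ S, S ⊆ U ∧ IsSpecification S ∧ R ∈ S) ↔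
      ∃ T, T ⊆ U ∧ IsClosedRuleSet T ∧ R ∈ T) := by
    intro R
    constructor
    · rintro ⟨S, hSU, hspec, hRS⟩
      exact ⟨S, hSU, fun r hr b hb => (hspec r hr b hb).exists.imp fun r' h => ⟨h.1, h.2⟩, hRS⟩
    · rintro ⟨T, hTU, hcl, hRT⟩
      obtain ⟨S, hST, hspec, hRS⟩ := closed_mem_spec hcl hRT
      exact ⟨S, hST.trans hTU, hspec, hRS⟩
  refine ⟨fun R _ => key R, ?_⟩
  ext R
  simp only [Set.mem_sUnion, Set.mem_setOf_eq]
  constructor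
  · rintro ⟨S, ⟨h1, h2⟩, h3⟩
    obtain ⟨T, a, b, c⟩ := (key R).mp ⟨S, h1, h2, h3⟩
    exact ⟨T, ⟨a, b⟩, c⟩
  · rintro ⟨T, ⟨h1, h2⟩, h3⟩
    obtain ⟨S, a, b, c⟩ := (key R).mpr ⟨T, h1, h2, h3⟩
    exact ⟨S, ⟨a, b⟩, c⟩
end

section
/- Let V be a type and E : V → Finset V, and suppose there is no infinite directed walk, i.e., there is no function f : ℕ → V with f(n+1) ∈ E(f(n)) for all n ∈ ℕ. Let F : V → ((V → ℂ) → ℂ) be local to E. Then there exists exactly one function x : V → ℂ such that x(v) = F v x for every v ∈ V. -/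
/-- If a reliance graph `E : V → Finset V` has no infinite directed walks, then any
family of counting equations `F` that is local to `E` (each equation depends only on
the values at the out-neighbours) has a unique solution. -/
theorem unique_solution_of_no_infinite_walk {V : Type*} (E : V → Finset V)
    (hwalk : ¬ ∃ f : ℕ → V, ∀ n : ℕ, f (n + 1) ∈ E (f n))
    (F : V → (V → ℂ) → ℂ)
    (hlocal : ∀ (v : V) (x y : V → ℂ), (∀ w ∈ E v, x w = y w) → F v x = F v y) :
    ∃! x : V → ℂ, ∀ v : V, x v = F v x := by
  classical
  set r : V → V → Prop := fun w v => w ∈ E v with hr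
  have hWF : WellFounded r := by
    by_contra h
    have hex : ∃ v, ¬ Acc r v := by
      by_contra hc
      push_neg at hc
      exact h ⟨hc⟩
    obtain ⟨v0, hv0⟩ := hex
    have key : ∀ v : {v : V // ¬ Acc r v}, ∃ w : {v : V // ¬ Acc r v}, r w.1 v.1 := by
      rintro ⟨v, hv⟩
      by_contra hc
      push_neg at hc
      refine hv (Acc.intro v fun w hw => ?_)
      by_contra hw'
      exact hc ⟨w, hw'⟩ hw
    choose g hg using key
    set f : ℕ → {v : V // ¬ Acc r v} := fun n => Nat.rec ⟨v0, hv0⟩ (fun _ p => g p) n with hf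
    exact hwalk ⟨fun n => (f n).1, fun n => hg (f n)⟩
  set x : V → ℂ := hWF.fix
    (fun v ih => F v (fun w => if h : r w v then ih w h else 0)) with hx
  have hfix : ∀ v, x v = F v (fun w => if _ : r w v then x w else 0) := fun v =>
    hWF.fix_eq _ v
  have hsol : ∀ v, x v = F v x := by
    intro v
    rw [hfix v]
    exact hlocal v _ _ (fun w hw => by simp [hr, hw])
  refine ⟨x, hsol, ?_⟩
  intro y hy
  funext v
  induction v using hWF.induction with
  | _ v ih =>
    rw [hy v, hsol v]
    exact hlocal v y x (fun w hw => ih w hw)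
end

section
/- Let S be a finite type, a : S → ℕ → ℕ, and R a binary relation on S × ℕ such that for all (v,N) and (w,j) with (v,N) R (w,j): (1) j ≤ N, and (2) if j = N then a(w)(n) ≤ a(v)(n) for all n ∈ ℕ and a(w)(ℓ) < a(v)(ℓ) for some ℓ ∈ ℕ. Then R admits no infinite directed walk: there is no function f : ℕ → S × ℕ with f(i) R f(i+1) for all i ∈ ℕ. -/
/-- The reliance graph of a specification composed of productive strategies has no
infinite directed walks: if every reliance `(v,N) R (w,j)` satisfies `j ≤ N`, and
moreover whenever `j = N` the counting sequence of `w` is dominated by that of `v`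
and strictly smaller at some size, then there is no infinite directed walk. -/
theorem no_infinite_walk_of_productive {S : Type*} [Finite S] (a : S → ℕ → ℕ)
    (R : S × ℕ → S × ℕ → Prop)
    (h1 : ∀ p q : S × ℕ, R p q → q.2 ≤ p.2)
    (h2 : ∀ p q : S × ℕ, R p q → q.2 = p.2 →
      (∀ n : ℕ, a q.1 n ≤ a p.1 n) ∧ ∃ ℓ : ℕ, a q.1 ℓ < a p.1 ℓ) :
    ¬ ∃ f : ℕ → S × ℕ, ∀ i : ℕ, R (f i) (f (i + 1)) := by
  rintro ⟨f, hf⟩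
  -- second coordinates are antitone
  have hanti : ∀ i j : ℕ, i ≤ j → (f j).2 ≤ (f i).2 := by
    intro i j hij
    induction j with
    | zero => have : i = 0 := by omega
              subst this; exact le_refl _
    | succ k ih =>
      rcases Nat.lt_succ_iff_lt_or_eq.mp (Nat.lt_succ_of_le hij) with h | h
      · exact le_trans (h1 _ _ (hf k)) (ih (Nat.lt_succ_iff.mp h))
      · subst h; exact le_refl _
  -- the infimum of the second coordinates is attained
  have hne : (Set.range fun i => (f i).2).Nonempty := ⟨(f 0).2, 0, rfl⟩
  obtain ⟨i0, hi0⟩ := Nat.sInf_mem hne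
  have hconst : ∀ i, i0 ≤ i → (f i).2 = (f i0).2 := by
    intro i hi
    have h1' : (f i).2 ≤ (f i0).2 := hanti _ _ hi
    have h2' : sInf (Set.range fun i => (f i).2) ≤ (f i).2 := Nat.sInf_le ⟨i, rfl⟩
    have h3 : (f i0).2 = sInf (Set.range fun i => (f i).2) := hi0
    omega
  -- strict relation on symbols after stabilization
  set r : S → S → Prop := fun v w => (∀ n, a w n ≤ a v n) ∧ ∃ ℓ, a w ℓ < a v ℓ with hr
  have hstep : ∀ i, i0 ≤ i → r (f i).1 (f (i + 1)).1 := by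
    intro i hi
    exact h2 _ _ (hf i) (by rw [hconst (i + 1) (by omega), hconst i hi])
  have hchain : ∀ i, i0 ≤ i → ∀ j, i < j → r (f i).1 (f j).1 := by
    intro i hi j hj
    induction j with
    | zero => omega
    | succ k ih =>
      rcases Nat.lt_succ_iff_lt_or_eq.mp hj with h | h
      · obtain ⟨hle, ℓ, hlt⟩ := ih h
        obtain ⟨hle', _, _⟩ := hstep k (by omega)
        exact ⟨fun n => le_trans (hle' n) (hle n), ℓ, lt_of_le_of_lt (hle' ℓ) hlt⟩
      · subst h; exact hstep i hi
  obtain ⟨x, y, hxy, heq⟩ :=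
    Finite.exists_ne_map_eq_of_infinite (fun n => (f (i0 + n)).1)
  rcases lt_or_gt_of_ne hxy with h | h
  · obtain ⟨_, ℓ, hlt⟩ := hchain (i0 + x) (by omega) (i0 + y) (by omega)
    rw [heq] at hlt; exact lt_irrefl _ hlt
  · obtain ⟨_, ℓ, hlt⟩ := hchain (i0 + y) (by omega) (i0 + x) (by omega)
    rw [heq] at hlt; exact lt_irrefl _ hlt
end

section
/- Let S be a finite type, a : S → ℕ → ℕ, and E : S × ℕ → Finset (S × ℕ) such that for all (v,N) and all (w,j) ∈ E(v,N): (1) j ≤ N, and (2) if j = N then a(w)(n) ≤ a(v)(n) for all n ∈ ℕ and a(w)(ℓ) < a(v)(ℓ) for some ℓ ∈ ℕ. Let F : S × ℕ → (((S × ℕ) → ℂ) → ℂ) be local to E, i.e., F p x = F p y whenever x and y agree on every element of E(p). Then there exists exactly one function x : S × ℕ → ℂ with x(p) = F p x for every p ∈ S × ℕ. -/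
/-- A specification composed of rules derived from productive strategies is
productive: if the reliance graph `E` on `S × ℕ` satisfies the productivity
conditions with respect to the counting sequences `a`, then any family of counting
equations `F` local to `E` has a unique solution. -/
theorem productive_unique_solution {S : Type*} [Finite S] (a : S → ℕ → ℕ)
    (E : S × ℕ → Finset (S × ℕ))
    (h1 : ∀ p q : S × ℕ, q ∈ E p → q.2 ≤ p.2)
    (h2 : ∀ p q : S × ℕ, q ∈ E p → q.2 = p.2 →
      (∀ n : ℕ, a q.1 n ≤ a p.1 n) ∧ ∃ ℓ : ℕ, a q.1 ℓ < a p.1 ℓ)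
    (F : S × ℕ → ((S × ℕ) → ℂ) → ℂ)
    (hlocal : ∀ (p : S × ℕ) (x y : (S × ℕ) → ℂ), (∀ q ∈ E p, x q = y q) → F p x = F p y) :
    ∃! x : (S × ℕ) → ℂ, ∀ p : S × ℕ, x p = F p x := by
  classical
  -- strict order on symbols
  set r : S → S → Prop := fun w v => (∀ n, a w n ≤ a v n) ∧ ∃ ℓ, a w ℓ < a v ℓ with hr
  have rtrans : Transitive r := by
    rintro u v w ⟨huv, ℓ, hℓ⟩ ⟨hvw, ℓ', hℓ'⟩
    exact ⟨fun n => (huv n).trans (hvw n), ℓ, lt_of_lt_of_le hℓ (hvw ℓ)⟩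
  have rirrefl : ∀ v, ¬ r v v := by
    rintro v ⟨_, ℓ, hℓ⟩; exact lt_irrefl _ hℓ
  have rwf : WellFounded r := by
    haveI : IsTrans S r := ⟨fun _ _ _ h h' => rtrans h h'⟩
    haveI : IsIrrefl S r := ⟨rirrefl⟩
    exact Finite.wellFounded_of_trans_of_irrefl r
  -- relation on vertices
  set rel : S × ℕ → S × ℕ → Prop :=
    fun q p => q.2 < p.2 ∨ (q.2 = p.2 ∧ r q.1 p.1) with hrel
  have wf : WellFounded rel := by
    have hlex : WellFounded (Prod.Lex (· < · : ℕ → ℕ → Prop) r) :=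
      WellFounded.prod_lex (wellFounded_lt) rwf
    have := InvImage.wf (fun p : S × ℕ => (p.2, p.1)) hlex
    apply Subrelation.wf (r := InvImage (Prod.Lex (· < · : ℕ → ℕ → Prop) r)
      (fun p : S × ℕ => (p.2, p.1))) _ this
    rintro q p (h | ⟨h1', h2'⟩)
    · exact Prod.Lex.left _ _ h
    · obtain ⟨qs, qn⟩ := q
      obtain ⟨ps, pn⟩ := p
      dsimp at h1' h2' ⊢
      subst h1'
      exact Prod.Lex.right _ h2'
  have hE : ∀ p q, q ∈ E p → rel q p := by
    intro p q hq
    rcases lt_or_eq_of_le (h1 p q hq) with h | h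
    · exact Or.inl h
    · exact Or.inr ⟨h, h2 p q hq h⟩
  -- define x by well-founded recursion
  set x : (S × ℕ) → ℂ :=
    wf.fix (fun p IH => F p (fun q => if h : rel q p then IH q h else 0)) with hx
  have hxeq : ∀ p, x p = F p (fun q => if h : rel q p then x q else 0) := by
    intro p
    rw [hx, wf.fix_eq]
  have hxsol : ∀ p, x p = F p x := by
    intro p
    rw [hxeq p]
    apply hlocal
    intro q hq
    simp [hE p q hq]
  refine ⟨x, hxsol, ?_⟩
  intro y hy
  funext p
  induction p using wf.induction with
  | _ p IH =>
    rw [hy p, hxsol p]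
    apply hlocal
    intro q hq
    exact IH q (hE p q hq)
end

section
/- Let 𝒯 = ((t,u), 𝒪, ℛ) be a tiling and H a set of gridded permutations in 𝒢^(t,u). Let 𝒯_O = ((t,u), 𝒪 ∪ H, ℛ) and 𝒯_R = ((t,u), 𝒪, ℛ ∪ {H}), and suppose Grid(𝒯_O) and Grid(𝒯_R) are both nonempty. Then Grid(𝒯) is the disjoint union of Grid(𝒯_O) and Grid(𝒯_R); consequently, writing |X_n| for the number of size-n elements of a set X of gridded permutations, |Grid(𝒯)_n| ≥ |Grid(𝒯_O)_n| for all n with strict inequality for at least one n, and |Grid(𝒯)_n| ≥ |Grid(𝒯_R)_n| for all n with strict inequality for at least one n. (In particular the Requirement Insertion strategy is productive.) -/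
/-- The number of gridded permutations of size `m` in a set `X`. -/
noncomputable def sizeCount (X : Set GP) (m : ℕ) : ℕ :=
  Nat.card {g : GP // g ∈ X ∧ g.n = m}

lemma GP.finite_fiber (t u m : ℕ) : {g : GP | g ∈ Ggrid t u ∧ g.n = m}.Finite := by
  classical
  have hpi : {f : Fin m → ℕ × ℕ | ∀ i, (f i).1 < t ∧ (f i).2 < u}.Finite := by
    have hsub : {f : Fin m → ℕ × ℕ | ∀ i, (f i).1 < t ∧ (f i).2 < u} ⊆
        Set.pi Set.univ (fun _ : Fin m => Set.Iio t ×ˢ Set.Iio u) := by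
      intro f hf i _
      exact hf i
    exact (Set.Finite.pi (fun _ => (Set.finite_Iio t).prod (Set.finite_Iio u))).subset hsub
  have hK : (Set.univ ×ˢ {f : Fin m → ℕ × ℕ | ∀ i, (f i).1 < t ∧ (f i).2 < u} :
      Set (Equiv.Perm (Fin m) × (Fin m → ℕ × ℕ))).Finite :=
    Set.finite_univ.prod hpi
  refine (hK.image (fun pc => (⟨m, pc.1, pc.2⟩ : GP))).subset ?_
  rintro g ⟨⟨_, hg⟩, hn⟩
  obtain ⟨n, p, c⟩ := g
  dsimp at hn; subst hn
  exact ⟨(p, c), ⟨trivial, hg⟩, rfl⟩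

lemma sizeCount_eq_ncard (X : Set GP) (m : ℕ) :
    sizeCount X m = Set.ncard {g : GP | g ∈ X ∧ g.n = m} := by
  rw [sizeCount]
  exact (Nat.card_coe_set_eq _).symm

/-- Requirement Insertion: inserting a set `H` of gridded permutations splits
`Grid(𝒯)` into the disjoint union of `Grid(𝒯_O)` (avoiding `H`) and `Grid(𝒯_R)`
(containing `H`), and when both parts are nonempty the counting sequence of each
part is dominated by that of `Grid(𝒯)` with strict inequality at some size
(so the Requirement Insertion strategy is productive). -/
theorem requirement_insertion_productive (t u : ℕ) (O : Set GP) (R : List (Set GP))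
    (H : Set GP)
    (hO : (GridSet t u (O ∪ H) R).Nonempty)
    (hR : (GridSet t u O (H :: R)).Nonempty) :
    GridSet t u O R = GridSet t u (O ∪ H) R ∪ GridSet t u O (H :: R) ∧
    Disjoint (GridSet t u (O ∪ H) R) (GridSet t u O (H :: R)) ∧
    (∀ m : ℕ, sizeCount (GridSet t u (O ∪ H) R) m ≤ sizeCount (GridSet t u O R) m) ∧
    (∃ m : ℕ, sizeCount (GridSet t u (O ∪ H) R) m < sizeCount (GridSet t u O R) m) ∧
    (∀ m : ℕ, sizeCount (GridSet t u O (H :: R)) m ≤ sizeCount (GridSet t u O R) m) ∧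
    (∃ m : ℕ, sizeCount (GridSet t u O (H :: R)) m < sizeCount (GridSet t u O R) m) := by
  classical
  have hsubO : GridSet t u (O ∪ H) R ⊆ GridSet t u O R := by
    rintro g ⟨hg1, hg2, hg3⟩
    exact ⟨hg1, fun o ho => hg2 o (Or.inl ho), hg3⟩
  have hsubR : GridSet t u O (H :: R) ⊆ GridSet t u O R := by
    rintro g ⟨hg1, hg2, hg3⟩
    exact ⟨hg1, hg2, fun Ri hRi => hg3 Ri (List.mem_cons_of_mem _ hRi)⟩
  have hunion : GridSet t u O R = GridSet t u (O ∪ H) R ∪ GridSet t u O (H :: R) := by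
    apply Set.Subset.antisymm
    · rintro g ⟨hg1, hg2, hg3⟩
      by_cases hc : ∃ x ∈ H, g.Contains x
      · exact Or.inr ⟨hg1, hg2, fun Ri hRi => by
          rcases List.mem_cons.mp hRi with h | h
          · exact h ▸ hc
          · exact hg3 Ri h⟩
      · refine Or.inl ⟨hg1, ?_, hg3⟩
        rintro o (ho | ho)
        · exact hg2 o ho
        · exact fun hcon => hc ⟨o, ho, hcon⟩
    · exact Set.union_subset hsubO hsubR
  have hdisj : Disjoint (GridSet t u (O ∪ H) R) (GridSet t u O (H :: R)) := by
    rw [Set.disjoint_left]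
    rintro g ⟨_, hg2, _⟩ ⟨_, _, hg3⟩
    obtain ⟨x, hx, hcon⟩ := hg3 H List.mem_cons_self
    exact hg2 x (Or.inr hx) hcon
  have hfin : ∀ m : ℕ, {g : GP | g ∈ GridSet t u O R ∧ g.n = m}.Finite := by
    intro m
    refine (GP.finite_fiber t u m).subset ?_
    rintro g ⟨⟨hg1, _, _⟩, hn⟩
    exact ⟨hg1, hn⟩
  have key : ∀ X : Set GP, X ⊆ GridSet t u O R →
      (∀ m : ℕ, sizeCount X m ≤ sizeCount (GridSet t u O R) m) := by
    intro X hX m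
    rw [sizeCount_eq_ncard, sizeCount_eq_ncard]
    exact Set.ncard_le_ncard (fun g hg => ⟨hX hg.1, hg.2⟩) (hfin m)
  have keyS : ∀ X : Set GP, X ⊆ GridSet t u O R → ∀ w : GP, w ∈ GridSet t u O R → w ∉ X →
      sizeCount X w.n < sizeCount (GridSet t u O R) w.n := by
    intro X hX w hw hwX
    rw [sizeCount_eq_ncard, sizeCount_eq_ncard]
    refine Set.ncard_lt_ncard ?_ (hfin w.n)
    constructor
    · exact fun g hg => ⟨hX hg.1, hg.2⟩
    · intro hcontra
      exact hwX (hcontra ⟨hw, rfl⟩).1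
  obtain ⟨wO, hwO⟩ := hO
  obtain ⟨wR, hwR⟩ := hR
  have hwRnotO : wR ∉ GridSet t u (O ∪ H) R := fun h =>
    Set.disjoint_left.mp hdisj h hwR
  have hwOnotR : wO ∉ GridSet t u O (H :: R) := fun h =>
    Set.disjoint_left.mp hdisj hwO h
  exact ⟨hunion, hdisj, key _ hsubO,
    ⟨wR.n, keyS _ hsubO wR (hsubR hwR) hwRnotO⟩, key _ hsubR,
    ⟨wO.n, keyS _ hsubR wO (hsubO hwO) hwOnotR⟩⟩
end

section
/- Fix a cell c ∈ ℕ × ℕ and gridded permutations g and h with h ≤ g. Then every multiplex of g around c contains some multiplex of h around c: for all g' ∈ M_c(g) there exists h' ∈ M_c(h) with h' ≤ g'. -/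
/-- The map `b_p : ℕ → ℕ` contracting the three values `p, p+1, p+2` to `p`. -/
def bmap (p i : ℕ) : ℕ := if i < p then i else if i ≤ p + 2 then p else i - 2

/-- The contraction map `β_c` on cells around the cell `c`. -/
def betaCell (c d : ℕ × ℕ) : ℕ × ℕ := (bmap c.1 d.1, bmap c.2 d.2)

/-- The set `M_c(g)` of multiplexes of `g` around the cell `c`: the gridded
permutations with the same underlying permutation as `g` whose cells contract to
those of `g` under `β_c`. -/
def Mc (c : ℕ × ℕ) (g : GP) : Set GP :=
  {g' | g'.Consistent ∧ ∃ e : g'.n = g.n,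
    (∀ i : Fin g'.n, (g'.perm i : ℕ) = (g.perm (Fin.cast e i) : ℕ)) ∧
    ∀ i : Fin g'.n, betaCell c (g'.cells i) = g.cells (Fin.cast e i)}

/-- If `h ≤ g`, then every multiplex of `g` around `c` contains some multiplex of `h`
around `c`. -/
theorem multiplex_of_contains (c : ℕ × ℕ) (g h : GP)
    (hg : g.Consistent) (hh : h.Consistent) (hgh : g.Contains h) :
    ∀ g' ∈ Mc c g, ∃ h' ∈ Mc c h, g'.Contains h' := by
  rintro g' ⟨hg'c, e, hperm, hcells⟩
  obtain ⟨f, hfmono, hford, hfcell⟩ := hgh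
  -- map into g'
  set F : Fin h.n → Fin g'.n := fun i => Fin.cast e.symm (f i) with hF
  have hFmono : StrictMono F := fun i j hij =>
    show (F i).val < (F j).val from hfmono hij
  have hcast : ∀ i : Fin h.n, Fin.cast e (F i) = f i := fun i => rfl
  have hpermF : ∀ i j : Fin h.n,
      (h.perm i < h.perm j ↔ g'.perm (F i) < g'.perm (F j)) := by
    intro i j
    rw [hford i j]
    have h1 := hperm (F i)
    have h2 := hperm (F j)
    rw [hcast i] at h1
    rw [hcast j] at h2
    constructor <;> intro hlt
    · rw [Fin.lt_def] at hlt ⊢; omega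
    · rw [Fin.lt_def] at hlt ⊢; omega
  refine ⟨⟨h.n, h.perm, fun i => g'.cells (F i)⟩, ⟨?_, rfl, ?_, ?_⟩, F, hFmono, ?_, ?_⟩
  · constructor
    · intro i j hij
      exact hg'c.1 (F i) (F j) (hFmono hij)
    · intro i j hij
      exact hg'c.2 (F i) (F j) ((hpermF i j).mp hij)
  · intro i; rfl
  · intro i
    have := hcells (F i)
    rw [hcast i] at this
    simp only [Fin.cast_eq_self]
    rw [this, hfcell i]
  · intro i j; exact hpermF i j
  · intro i; rfl
end

section
/- Fix a cell c ∈ ℕ × ℕ and gridded permutations g and h. If some multiplex of g around c contains some multiplex of h around c — that is, if there exist g' ∈ M_c(g) and h' ∈ M_c(h) with h' ≤ g' — then h ≤ g. -/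
/-- If some multiplex of `g` around `c` contains some multiplex of `h` around `c`,
then `h ≤ g`. -/
theorem contains_of_multiplex (c : ℕ × ℕ) (g h : GP)
    (hg : g.Consistent) (hh : h.Consistent)
    (hmul : ∃ g' ∈ Mc c g, ∃ h' ∈ Mc c h, g'.Contains h') :
    g.Contains h := by
  obtain ⟨g', ⟨_, eg, hgp, hgc⟩, h', ⟨_, eh, hhp, hhc⟩, f, hf, hfp, hfc⟩ := hmul
  refine ⟨fun i => Fin.cast eg (f (Fin.cast eh.symm i)), ?_, ?_, ?_⟩
  · intro i j hij
    exact hf (by simpa using hij)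
  · intro i j
    have key : ∀ a b : Fin h'.n, (h'.perm a < h'.perm b) ↔
        (h.perm (Fin.cast eh a) < h.perm (Fin.cast eh b)) := fun a b => by
      rw [Fin.lt_iff_val_lt_val, Fin.lt_iff_val_lt_val, hhp, hhp]
    have key2 : ∀ a b : Fin h'.n, (g'.perm (f a) < g'.perm (f b)) ↔
        (g.perm (Fin.cast eg (f a)) < g.perm (Fin.cast eg (f b))) := fun a b => by
      rw [Fin.lt_iff_val_lt_val, Fin.lt_iff_val_lt_val, hgp, hgp]
    simpa [key, key2] using hfp (Fin.cast eh.symm i) (Fin.cast eh.symm j)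
  · intro i
    have := hgc (f (Fin.cast eh.symm i))
    have h2 := hhc (Fin.cast eh.symm i)
    rw [hfc] at this
    simp only [h2] at this
    simpa using this.symm
end

section
/- With 𝒯 and 𝒯' as in the context, let g ∈ Grid(𝒯) and suppose g has exactly ℓ entries whose cell is c. Then the number of multiplexes of g around c that lie in Grid(𝒯') is exactly ℓ, i.e., |M_c(g) ∩ Grid(𝒯')| = ℓ. -/
/-- The size-1 gridded permutation in cell `d`. -/
def gp1 (d : ℕ × ℕ) : GP := ⟨1, Equiv.refl _, fun _ => d⟩

/-- The size-2 gridded permutation with underlying pattern `12` and cells `d1, d2`. -/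
def gp12 (d1 d2 : ℕ × ℕ) : GP := ⟨2, Equiv.refl _, ![d1, d2]⟩

/-- The size-2 gridded permutation with underlying pattern `21` and cells `d1, d2`. -/
def gp21 (d1 d2 : ℕ × ℕ) : GP := ⟨2, Equiv.swap 0 1, ![d1, d2]⟩

/-- `M_c` applied elementwise to a set of gridded permutations. -/
def McSet (c : ℕ × ℕ) (X : Set GP) : Set GP := ⋃ x ∈ X, Mc c x

section Helpers

/-- The shifted value of a coordinate in a multiplex determined by a distinguished point. -/
def shval (cx a i p : ℕ) : ℕ :=
  if a < cx then a else if cx < a then a + 2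
  else if i < p then cx else if i = p then cx + 1 else cx + 2

lemma bmap_shval (cx a i p : ℕ) : bmap cx (shval cx a i p) = a := by
  unfold bmap shval; split_ifs <;> omega

lemma bmap_succ (p : ℕ) : bmap p (p + 1) = p := by
  unfold bmap; split_ifs <;> omega

lemma shval_le {a b i j : ℕ} (cx p : ℕ) (hab : a ≤ b) (hij : i ≤ j) :
    shval cx a i p ≤ shval cx b j p := by
  unfold shval; split_ifs <;> omega

lemma shval_eq_mid {cx a i p : ℕ} : shval cx a i p = cx + 1 ↔ a = cx ∧ i = p := by
  unfold shval; split_ifs <;> omega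

lemma shval_lt {a i p cx t : ℕ} (h : a < t) : shval cx a i p < t + 2 := by
  unfold shval; split_ifs <;> omega

lemma shval_inv_lt {cx a v i p : ℕ} (hb : bmap cx v = a) (hv : v ≠ cx + 1)
    (hle : v ≤ cx + 1) (hip : i < p) : v = shval cx a i p := by
  unfold bmap at hb; unfold shval; split_ifs at hb ⊢ <;> omega

lemma shval_inv_gt {cx a v i p : ℕ} (hb : bmap cx v = a) (hv : v ≠ cx + 1)
    (hge : cx + 1 ≤ v) (hip : p < i) : v = shval cx a i p := by
  unfold bmap at hb; unfold shval; split_ifs at hb ⊢ <;> omega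

lemma contains_gp1 (g : GP) (d : ℕ × ℕ) : g.Contains (gp1 d) ↔ ∃ i, g.cells i = d := by
  have hn : (gp1 d).n = 1 := rfl
  constructor
  · rintro ⟨f, -, -, hc⟩
    exact ⟨f ⟨0, Nat.one_pos⟩, hc ⟨0, Nat.one_pos⟩⟩
  · rintro ⟨i, hi⟩
    refine ⟨fun _ => i, ?_, ?_, ?_⟩
    · intro a b hab
      exfalso
      have ha := a.isLt; have hb := b.isLt
      rw [Fin.lt_def] at hab
      omega
    · intro a b
      have : a = b := Fin.ext (by have ha := a.isLt; have hb := b.isLt; omega)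
      subst this; simp
    · intro j; simpa [gp1] using hi

lemma strictMono_fin2 {α} [Preorder α] {f : Fin 2 → α} (h : f 0 < f 1) : StrictMono f := by
  intro a b hab
  fin_cases a <;> fin_cases b <;> first | exact absurd hab (by decide) | exact h

lemma contains_pair (g : GP) {i j : Fin g.n} (hij : i < j) (d : ℕ × ℕ)
    (hi : g.cells i = d) (hj : g.cells j = d) :
    g.Contains (gp12 d d) ∨ g.Contains (gp21 d d) := by
  have hne : g.perm i ≠ g.perm j := fun h => absurd (g.perm.injective h) (ne_of_lt hij)
  rcases lt_or_gt_of_ne hne with hp | hp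
  · left
    refine ⟨![i, j], strictMono_fin2 (by simpa using hij), ?_, ?_⟩
    · intro a b
      fin_cases a <;> fin_cases b <;>
        simp [gp12, hp, lt_asymm hp, lt_irrefl] <;> exact of_decide_eq_true rfl
    · intro a
      fin_cases a <;> simp [gp12, hi, hj]
  · right
    refine ⟨![i, j], strictMono_fin2 (by simpa using hij), ?_, ?_⟩
    · intro a b
      fin_cases a <;> fin_cases b <;>
        simp [gp21, hp, lt_asymm hp, lt_irrefl, Equiv.swap_apply_left, Equiv.swap_apply_right] <;> exact of_decide_eq_true rfl
    · intro a
      fin_cases a <;> simp [gp21, hi, hj]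

end Helpers
/-- The multiplex of `g` around `c` determined by the distinguished point `p`. -/
def shiftedGP (c : ℕ × ℕ) (g : GP) (p : Fin g.n) : GP :=
  ⟨g.n, g.perm, fun i =>
    (shval c.1 (g.cells i).1 i p, shval c.2 (g.cells i).2 (g.perm i) (g.perm p))⟩

lemma shiftedGP_consistent {c : ℕ × ℕ} {g : GP} (hg : g.Consistent) (p : Fin g.n) :
    (shiftedGP c g p).Consistent := by
  constructor
  · intro i j hij
    exact shval_le c.1 p.1 (hg.1 i j hij) (le_of_lt (Fin.lt_def.mp hij))
  · intro i j hij
    exact shval_le c.2 (g.perm p).1 (hg.2 i j hij) (le_of_lt (Fin.lt_def.mp hij))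

lemma shiftedGP_mem_Mc {c : ℕ × ℕ} {g : GP} (hg : g.Consistent) (p : Fin g.n) :
    shiftedGP c g p ∈ Mc c g := by
  refine ⟨shiftedGP_consistent hg p, rfl, fun i => rfl, fun i => ?_⟩
  show betaCell c _ = g.cells i
  unfold betaCell shiftedGP
  exact Prod.ext (bmap_shval _ _ _ _) (bmap_shval _ _ _ _)

lemma shiftedGP_fst_eq {c : ℕ × ℕ} {g : GP} {p : Fin g.n} (hp : g.cells p = c) (i : Fin g.n) :
    ((shiftedGP c g p).cells i).1 = c.1 + 1 ↔ i = p := by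
  show shval c.1 (g.cells i).1 i p = c.1 + 1 ↔ i = p
  rw [shval_eq_mid]
  constructor
  · rintro ⟨-, h⟩; exact Fin.ext h
  · rintro rfl; exact ⟨congrArg Prod.fst hp, rfl⟩

lemma shiftedGP_cells_p {c : ℕ × ℕ} {g : GP} {p : Fin g.n} (hp : g.cells p = c) :
    (shiftedGP c g p).cells p = (c.1 + 1, c.2 + 1) := by
  show (shval c.1 (g.cells p).1 p p, shval c.2 (g.cells p).2 (g.perm p) (g.perm p)) = _
  rw [hp]
  exact Prod.ext (shval_eq_mid.mpr ⟨rfl, rfl⟩) (shval_eq_mid.mpr ⟨rfl, rfl⟩)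

lemma mc_contains_transfer {c : ℕ × ℕ} {g g' o o' : GP} (hg' : g' ∈ Mc c g)
    (ho' : o' ∈ Mc c o) (h : g'.Contains o') : g.Contains o := by
  obtain ⟨-, e, hperm, hcell⟩ := hg'
  obtain ⟨-, e2, hperm2, hcell2⟩ := ho'
  obtain ⟨f, hf, hpat, hcells⟩ := h
  refine ⟨fun i => Fin.cast e (f (Fin.cast e2.symm i)), ?_, ?_, ?_⟩
  · intro a b hab
    have h1 : Fin.cast e2.symm a < Fin.cast e2.symm b := by
      rwa [Fin.lt_def, Fin.coe_cast, Fin.coe_cast, ← Fin.lt_def]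
    have := hf h1
    rwa [Fin.lt_def, ← Fin.coe_cast e (f _), ← Fin.coe_cast e (f _), ← Fin.lt_def] at this
  · intro a b
    have ha : Fin.cast e2 (Fin.cast e2.symm a) = a := by ext; simp
    have hb : Fin.cast e2 (Fin.cast e2.symm b) = b := by ext; simp
    have h1 := hperm2 (Fin.cast e2.symm a)
    have h2 := hperm2 (Fin.cast e2.symm b)
    rw [ha] at h1; rw [hb] at h2
    have h3 := hperm (f (Fin.cast e2.symm a))
    have h4 := hperm (f (Fin.cast e2.symm b))
    have h5 := hpat (Fin.cast e2.symm a) (Fin.cast e2.symm b)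
    simp only [Fin.lt_def] at h5 ⊢
    omega
  · intro a
    have ha : Fin.cast e2 (Fin.cast e2.symm a) = a := by ext; simp
    have h1 := hcell (f (Fin.cast e2.symm a))
    have h2 := hcells (Fin.cast e2.symm a)
    have h3 := hcell2 (Fin.cast e2.symm a)
    rw [h2] at h1
    rw [h3, ha] at h1
    exact h1.symm

lemma mc_req_transfer {c : ℕ × ℕ} {g g' x : GP} (hg' : g' ∈ Mc c g) (h : g.Contains x) :
    ∃ x' ∈ Mc c x, g'.Contains x' := by
  obtain ⟨hcons, e, hperm, hcell⟩ := hg'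
  obtain ⟨f, hf, hpat, hcells⟩ := h
  refine ⟨⟨x.n, x.perm, fun i => g'.cells (Fin.cast e.symm (f i))⟩, ⟨?_, rfl, fun i => rfl, fun i => ?_⟩, ?_⟩
  · constructor
    · intro i j hij
      have h1 : Fin.cast e.symm (f i) < Fin.cast e.symm (f j) := by
        rw [Fin.lt_def, Fin.coe_cast, Fin.coe_cast, ← Fin.lt_def]
        exact hf hij
      exact hcons.1 _ _ h1
    · intro i j hij
      apply hcons.2
      have h1 := hperm (Fin.cast e.symm (f i))
      have h2 := hperm (Fin.cast e.symm (f j))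
      have ha : Fin.cast e (Fin.cast e.symm (f i)) = f i := by ext; simp
      have hb : Fin.cast e (Fin.cast e.symm (f j)) = f j := by ext; simp
      rw [ha] at h1; rw [hb] at h2
      have h5 := (hpat i j).mp hij
      rw [Fin.lt_def] at h5 ⊢
      omega
  · have h1 := hcell (Fin.cast e.symm (f (Fin.cast rfl i)))
    have ha : Fin.cast e (Fin.cast e.symm (f (Fin.cast rfl i))) = f (Fin.cast rfl i) := by ext; simp
    rw [ha] at h1
    show betaCell c (g'.cells (Fin.cast e.symm (f (Fin.cast rfl i)))) = x.cells (Fin.cast rfl i)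
    rw [h1, hcells]
  · refine ⟨fun i => Fin.cast e.symm (f i), ?_, ?_, fun i => rfl⟩
    · intro a b hab
      rw [Fin.lt_def, Fin.coe_cast, Fin.coe_cast, ← Fin.lt_def]
      exact hf hab
    · intro a b
      have h1 := hperm (Fin.cast e.symm (f a))
      have h2 := hperm (Fin.cast e.symm (f b))
      have ha : Fin.cast e (Fin.cast e.symm (f a)) = f a := by ext; simp
      have hb : Fin.cast e (Fin.cast e.symm (f b)) = f b := by ext; simp
      rw [ha] at h1; rw [hb] at h2
      have h5 := hpat a b
      show x.perm a < x.perm b ↔ g'.perm (Fin.cast e.symm (f a)) < g'.perm (Fin.cast e.symm (f b))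
      simp only [Fin.lt_def] at h5 ⊢
      omega
lemma shiftedGP_forward (t u : ℕ) (c : ℕ × ℕ)
    (O : Set GP) (R1 : Set GP) (Rs : List (Set GP))
    (g : GP) (hg : g ∈ GridSet t u O (R1 :: Rs)) (p : Fin g.n) (hp : g.cells p = c) :
    shiftedGP c g p ∈ GridSet (t + 2) (u + 2)
          (McSet c O ∪
            {gp12 (c.1 + 1, c.2 + 1) (c.1 + 1, c.2 + 1),
             gp21 (c.1 + 1, c.2 + 1) (c.1 + 1, c.2 + 1)} ∪
            {x | ∃ j : ℕ, j < u + 2 ∧ j ≠ c.2 + 1 ∧ x = gp1 (c.1 + 1, j)} ∪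
            {x | ∃ i : ℕ, i < t + 2 ∧ i ≠ c.1 + 1 ∧ x = gp1 (i, c.2 + 1)})
          (Rs.map (McSet c) ++ [{gp1 (c.1 + 1, c.2 + 1)}]) := by
  obtain ⟨⟨hgcons, hgbound⟩, hgavoid, hgreq⟩ := hg
  have hMc := shiftedGP_mem_Mc (c := c) hgcons p
  refine ⟨⟨shiftedGP_consistent hgcons p, fun i => ?_⟩, ?_, ?_⟩
  · exact ⟨shval_lt (hgbound i).1, shval_lt (hgbound i).2⟩
  · -- avoids all obstructions
    rintro o (((ho | ho) | ho) | ho) hcont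
    · -- McSet c O
      simp only [McSet, Set.mem_iUnion] at ho
      obtain ⟨o₀, ho₀, hoMc⟩ := ho
      exact hgavoid o₀ ho₀ (mc_contains_transfer hMc hoMc hcont)
    · -- pair obstructions
      simp only [Set.mem_insert_iff, Set.mem_singleton_iff] at ho
      have key : ∀ d1 d2 : ℕ × ℕ, o = gp12 d1 d2 ∨ o = gp21 d1 d2 →
          d1 = (c.1 + 1, c.2 + 1) → d2 = (c.1 + 1, c.2 + 1) → False := by
        rintro d1 d2 hd rfl rfl
        have hn2 : o.n = 2 := by rcases hd with rfl | rfl <;> rfl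
        obtain ⟨f, hf, -, hcells⟩ := hcont
        have h0 := hcells ⟨0, by omega⟩
        have h1 := hcells ⟨1, by omega⟩
        have hc0 : o.cells ⟨0, by omega⟩ = (c.1 + 1, c.2 + 1) := by
          rcases hd with rfl | rfl <;> rfl
        have hc1 : o.cells ⟨1, by omega⟩ = (c.1 + 1, c.2 + 1) := by
          rcases hd with rfl | rfl <;> rfl
        rw [hc0] at h0; rw [hc1] at h1
        have e0 : f ⟨0, by omega⟩ = p :=
          (shiftedGP_fst_eq hp _).mp (congrArg Prod.fst h0)
        have e1 : f ⟨1, by omega⟩ = p :=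
          (shiftedGP_fst_eq hp _).mp (congrArg Prod.fst h1)
        have hlt : f ⟨0, by omega⟩ < f ⟨1, by omega⟩ := hf (by rw [Fin.lt_def]; norm_num)
        rw [e0, e1] at hlt
        exact lt_irrefl _ hlt
      rcases ho with rfl | rfl
      · exact key _ _ (Or.inl rfl) rfl rfl
      · exact key _ _ (Or.inr rfl) rfl rfl
    · -- B1 : column c.1+1
      obtain ⟨j, hj, hjne, rfl⟩ := ho
      obtain ⟨i, hi⟩ := (contains_gp1 _ _).mp hcont
      have hip : i = p := (shiftedGP_fst_eq hp _).mp (congrArg Prod.fst hi)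
      rw [hip, shiftedGP_cells_p hp] at hi
      exact hjne (congrArg Prod.snd hi).symm
    · -- B2 : row c.2+1
      obtain ⟨j, hj, hjne, rfl⟩ := ho
      obtain ⟨i, hi⟩ := (contains_gp1 _ _).mp hcont
      have hsnd : ((shiftedGP c g p).cells i).2 = c.2 + 1 := congrArg Prod.snd hi
      have hip : i = p := by
        have := shval_eq_mid.mp hsnd
        have h2 : g.perm i = g.perm p := Fin.ext this.2
        exact g.perm.injective h2
      rw [hip, shiftedGP_cells_p hp] at hi
      exact hjne (congrArg Prod.fst hi).symm
  · -- requirements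
    intro Ri hRi
    rcases List.mem_append.mp hRi with h | h
    · obtain ⟨R₀, hR₀, rfl⟩ := List.mem_map.mp h
      obtain ⟨x, hx, hcont⟩ := hgreq R₀ (List.mem_cons_of_mem _ hR₀)
      obtain ⟨x', hx', hc'⟩ := mc_req_transfer hMc hcont
      exact ⟨x', Set.mem_biUnion hx hx', hc'⟩
    · rw [List.mem_singleton] at h
      subst h
      exact ⟨gp1 (c.1 + 1, c.2 + 1), rfl,
        (contains_gp1 _ _).mpr ⟨p, shiftedGP_cells_p hp⟩⟩

/-- Lemma `point-multiplex-in-T-prime`: if `g ∈ Grid(𝒯)` has exactly `ℓ` entries in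
the cell `c`, then exactly `ℓ` of the multiplexes of `g` around `c` lie in
`Grid(𝒯')`, where `𝒯'` is the intermediate tiling of the point placement strategy. -/
theorem point_multiplex_count (t u : ℕ) (c : ℕ × ℕ) (hct : c.1 < t) (hcu : c.2 < u)
    (O : Set GP) (R1 : Set GP) (Rs : List (Set GP))
    (hO : O ⊆ Ggrid t u) (hR1 : R1 ⊆ Ggrid t u) (hRs : ∀ Ri ∈ Rs, Ri ⊆ Ggrid t u)
    (g : GP) (hg : g ∈ GridSet t u O (R1 :: Rs)) :
    Nat.card {g' : GP // g' ∈ Mc c g ∧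
        g' ∈ GridSet (t + 2) (u + 2)
          (McSet c O ∪
            {gp12 (c.1 + 1, c.2 + 1) (c.1 + 1, c.2 + 1),
             gp21 (c.1 + 1, c.2 + 1) (c.1 + 1, c.2 + 1)} ∪
            {x | ∃ j : ℕ, j < u + 2 ∧ j ≠ c.2 + 1 ∧ x = gp1 (c.1 + 1, j)} ∪
            {x | ∃ i : ℕ, i < t + 2 ∧ i ≠ c.1 + 1 ∧ x = gp1 (i, c.2 + 1)})
          (Rs.map (McSet c) ++ [{gp1 (c.1 + 1, c.2 + 1)}])} =
      (Finset.univ.filter fun i : Fin g.n => g.cells i = c).card := by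
  classical
  have hgcons : g.Consistent := hg.1.1
  set Ψ : {i : Fin g.n // g.cells i = c} → {g' : GP // g' ∈ Mc c g ∧
        g' ∈ GridSet (t + 2) (u + 2)
          (McSet c O ∪
            {gp12 (c.1 + 1, c.2 + 1) (c.1 + 1, c.2 + 1),
             gp21 (c.1 + 1, c.2 + 1) (c.1 + 1, c.2 + 1)} ∪
            {x | ∃ j : ℕ, j < u + 2 ∧ j ≠ c.2 + 1 ∧ x = gp1 (c.1 + 1, j)} ∪
            {x | ∃ i : ℕ, i < t + 2 ∧ i ≠ c.1 + 1 ∧ x = gp1 (i, c.2 + 1)})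
          (Rs.map (McSet c) ++ [{gp1 (c.1 + 1, c.2 + 1)}])} :=
    fun p => ⟨shiftedGP c g p.1, shiftedGP_mem_Mc hgcons p.1,
      shiftedGP_forward t u c O R1 Rs g hg p.1 p.2⟩ with hΨ
  have hinj : Function.Injective Ψ := by
    intro p p' h
    have h0 : shiftedGP c g p.1 = shiftedGP c g p'.1 := congrArg Subtype.val h
    simp only [shiftedGP, GP.mk.injEq, heq_eq_eq, true_and] at h0
    have h2 := congrFun h0 p'.1
    have h3 : shval c.1 (g.cells p'.1).1 p'.1 p.1 = c.1 + 1 := by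
      have h2f : shval c.1 (g.cells p'.1).1 p'.1 p.1 = shval c.1 (g.cells p'.1).1 p'.1 p'.1 :=
        congrArg Prod.fst h2
      rw [h2f]
      rw [show (g.cells p'.1).1 = c.1 from congrArg Prod.fst p'.2]
      exact shval_eq_mid.mpr ⟨rfl, rfl⟩
    obtain ⟨-, hval⟩ := shval_eq_mid.mp h3
    exact Subtype.ext (Fin.ext hval.symm)
  have hsurj : Function.Surjective Ψ := by
    rintro ⟨⟨n', perm', cells'⟩, hMc, hGrid⟩
    have hMc2 := hMc
    obtain ⟨hcons', e, hperm, hcell⟩ := hMc2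
    dsimp only at e hperm hcell hcons'
    subst e
    have hpe : perm' = g.perm := Equiv.ext fun i => Fin.ext (hperm i)
    subst hpe
    -- the point q
    obtain ⟨x, hxmem, hxcont⟩ := hGrid.2.2 {gp1 (c.1 + 1, c.2 + 1)} (by simp)
    rw [Set.mem_singleton_iff] at hxmem
    subst hxmem
    obtain ⟨q, hq⟩ := (contains_gp1 _ _).mp hxcont
    have hq' : cells' q = (c.1 + 1, c.2 + 1) := hq
    have hcq : g.cells q = c := by
      have h1 : betaCell c (cells' q) = g.cells q := hcell q
      rw [hq'] at h1
      have hb : betaCell c (c.1 + 1, c.2 + 1) = c := Prod.ext (bmap_succ c.1) (bmap_succ c.2)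
      rw [hb] at h1
      exact h1.symm
    have havoid := hGrid.2.1
    -- no other entry in the middle row or column
    have hnot : ∀ i : Fin g.n, i ≠ q → (cells' i).1 ≠ c.1 + 1 ∧ (cells' i).2 ≠ c.2 + 1 := by
      intro i hne
      have hboth : ¬ (cells' i = (c.1 + 1, c.2 + 1)) := by
        intro hmid
        have hmidi : GP.cells ⟨g.n, g.perm, cells'⟩ i = (c.1 + 1, c.2 + 1) := hmid
        rcases lt_or_gt_of_ne hne with hlt | hlt
        · rcases contains_pair (⟨g.n, g.perm, cells'⟩ : GP) hlt _ hmidi hq with h12 | h21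
          · exact havoid _ (Set.mem_union_left _ (Set.mem_union_left _
              (Set.mem_union_right _ (Set.mem_insert _ _)))) h12
          · exact havoid _ (Set.mem_union_left _ (Set.mem_union_left _
              (Set.mem_union_right _ (Set.mem_insert_of_mem _ rfl)))) h21
        · rcases contains_pair (⟨g.n, g.perm, cells'⟩ : GP) hlt _ hq hmidi with h12 | h21
          · exact havoid _ (Set.mem_union_left _ (Set.mem_union_left _
              (Set.mem_union_right _ (Set.mem_insert _ _)))) h12
          · exact havoid _ (Set.mem_union_left _ (Set.mem_union_left _
              (Set.mem_union_right _ (Set.mem_insert_of_mem _ rfl)))) h21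
      constructor
      · intro hx
        by_cases hy : (cells' i).2 = c.2 + 1
        · exact hboth (Prod.ext hx hy)
        · have hb2 : (cells' i).2 < u + 2 := (hGrid.1.2 i).2
          exact havoid (gp1 (c.1 + 1, (cells' i).2))
            (Set.mem_union_left _ (Set.mem_union_right _ ⟨(cells' i).2, hb2, hy, rfl⟩))
            ((contains_gp1 _ _).mpr ⟨i, Prod.ext hx rfl⟩)
      · intro hy
        by_cases hx : (cells' i).1 = c.1 + 1
        · exact hboth (Prod.ext hx hy)
        · have hb1 : (cells' i).1 < t + 2 := (hGrid.1.2 i).1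
          exact havoid (gp1 ((cells' i).1, c.2 + 1))
            (Set.mem_union_right _ ⟨(cells' i).1, hb1, hx, rfl⟩)
            ((contains_gp1 _ _).mpr ⟨i, Prod.ext rfl hy⟩)
    refine ⟨⟨q, hcq⟩, Subtype.ext ?_⟩
    show shiftedGP c g q = (⟨g.n, g.perm, cells'⟩ : GP)
    simp only [shiftedGP, GP.mk.injEq, heq_eq_eq, true_and]
    funext i
    have hbi1 : bmap c.1 ((cells' i).1) = (g.cells i).1 := congrArg Prod.fst (hcell i)
    have hbi2 : bmap c.2 ((cells' i).2) = (g.cells i).2 := congrArg Prod.snd (hcell i)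
    by_cases hiq : i = q
    · subst hiq
      rw [hq']
      refine Prod.ext ?_ ?_
      · show shval c.1 (g.cells i).1 i i = c.1 + 1
        rw [show (g.cells i).1 = c.1 from congrArg Prod.fst hcq]
        exact shval_eq_mid.mpr ⟨rfl, rfl⟩
      · show shval c.2 (g.cells i).2 (g.perm i) (g.perm i) = c.2 + 1
        rw [show (g.cells i).2 = c.2 from congrArg Prod.snd hcq]
        exact shval_eq_mid.mpr ⟨rfl, rfl⟩
    · refine Prod.ext ?_ ?_
      · show shval c.1 (g.cells i).1 i q = (cells' i).1
        have hvne : (cells' i).1 ≠ c.1 + 1 := (hnot i hiq).1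
        rcases lt_or_gt_of_ne hiq with hlt | hlt
        · have hle : (cells' i).1 ≤ (cells' q).1 := hcons'.1 i q hlt
          rw [hq'] at hle
          exact (shval_inv_lt hbi1 hvne hle (Fin.lt_def.mp hlt)).symm
        · have hge : (cells' q).1 ≤ (cells' i).1 := hcons'.1 q i hlt
          rw [hq'] at hge
          exact (shval_inv_gt hbi1 hvne hge (Fin.lt_def.mp hlt)).symm
      · show shval c.2 (g.cells i).2 (g.perm i) (g.perm q) = (cells' i).2
        have hvne : (cells' i).2 ≠ c.2 + 1 := (hnot i hiq).2
        have hpne : g.perm i ≠ g.perm q := fun h => hiq (g.perm.injective h)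
        rcases lt_or_gt_of_ne hpne with hlt | hlt
        · have hle : (cells' i).2 ≤ (cells' q).2 := hcons'.2 i q hlt
          rw [hq'] at hle
          exact (shval_inv_lt hbi2 hvne hle (Fin.lt_def.mp hlt)).symm
        · have hge : (cells' q).2 ≤ (cells' i).2 := hcons'.2 q i hlt
          rw [hq'] at hge
          exact (shval_inv_gt hbi2 hvne hge (Fin.lt_def.mp hlt)).symm
  rw [← Nat.card_eq_of_bijective Ψ ⟨hinj, hsurj⟩]
  rw [Nat.card_eq_fintype_card, Fintype.card_subtype]
end

section
/- Fix a row index r ∈ ℕ and a set S ⊆ ℕ of column indices. If a gridded permutation g = (π, (c_1, …, c_n)) avoids all critical row patterns with respect to r and S, then Γ(g) := (π, (γ(c_1), …, γ(c_n))) satisfies the consistency condition, i.e., it is a valid gridded permutation. -/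
open Classical in
/-- The cell map `γ` of row separation at row `r` with columns `S`. -/
noncomputable def gammaCell (r : ℕ) (S : Set ℕ) (d : ℕ × ℕ) : ℕ × ℕ :=
  if d.2 < r ∨ (d.2 = r ∧ d.1 ∈ S) then d else (d.1, d.2 + 1)

/-- The map `Γ` of row separation, applying `γ` to every cell. -/
noncomputable def rowSepMap (r : ℕ) (S : Set ℕ) (g : GP) : GP :=
  ⟨g.n, g.perm, fun i => gammaCell r S (g.cells i)⟩

/-- The critical row patterns with respect to row `r` and column set `S`. -/
def Crit (r : ℕ) (S : Set ℕ) : Set GP :=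
  {x | (∃ i i' : ℕ, i ∈ S ∧ i' ∉ S ∧ i < i' ∧ x = gp21 (i, r) (i', r)) ∨
       (∃ i i' : ℕ, i' ∉ S ∧ i ∈ S ∧ i' < i ∧ x = gp12 (i', r) (i, r))}

/-- `g` avoids all critical row patterns with respect to `r` and `S`. -/
def AvoidsCrit (r : ℕ) (S : Set ℕ) (g : GP) : Prop :=
  ∀ x ∈ Crit r S, ¬ g.Contains x

lemma contains_gp12 (g : GP) (i j : Fin g.n) (hij : i < j) (hp : g.perm i < g.perm j) :
    g.Contains (gp12 (g.cells i) (g.cells j)) := by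
  refine ⟨![i, j], ?_, ?_, ?_⟩
  · intro a b hab
    fin_cases a <;> fin_cases b <;>
      simp_all [Matrix.cons_val_zero, Matrix.cons_val_one]
    · exact hij
    · exact (Nat.not_lt_zero _ hab).elim
  · intro a b
    fin_cases a <;> fin_cases b <;>
      simp_all [gp12, Matrix.cons_val_zero, Matrix.cons_val_one, lt_asymm hp] <;> exact of_decide_eq_true rfl
  · intro a
    fin_cases a <;> simp [gp12, Matrix.cons_val_zero, Matrix.cons_val_one]

lemma contains_gp21 (g : GP) (i j : Fin g.n) (hij : i < j) (hp : g.perm j < g.perm i) :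
    g.Contains (gp21 (g.cells i) (g.cells j)) := by
  refine ⟨![i, j], ?_, ?_, ?_⟩
  · intro a b hab
    fin_cases a <;> fin_cases b <;>
      simp_all [Matrix.cons_val_zero, Matrix.cons_val_one]
    · exact hij
    · exact (Nat.not_lt_zero _ hab).elim
  · intro a b
    fin_cases a <;> fin_cases b <;>
      simp_all [gp21, Matrix.cons_val_zero, Matrix.cons_val_one, Equiv.swap_apply_left,
        Equiv.swap_apply_right, lt_asymm hp] <;> exact of_decide_eq_true rfl
  · intro a
    fin_cases a <;> simp [gp21, Matrix.cons_val_zero, Matrix.cons_val_one]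

/-- If a gridded permutation `g` avoids all critical row patterns with respect to
`r` and `S`, then `Γ(g)` satisfies the consistency condition, i.e., it is a valid
gridded permutation. -/
theorem rowSep_consistent (r : ℕ) (S : Set ℕ) (g : GP) (hg : g.Consistent)
    (havoid : AvoidsCrit r S g) : (rowSepMap r S g).Consistent := by
  obtain ⟨hx, hy⟩ := hg
  constructor
  · intro i j hij
    have := hx i j hij
    simp only [rowSepMap, gammaCell]
    split <;> split <;> simpa
  · intro i j hpij
    have hyle : (g.cells i).2 ≤ (g.cells j).2 := hy i j hpij
    simp only [rowSepMap, gammaCell]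
    by_cases hA : (g.cells i).2 < r ∨ ((g.cells i).2 = r ∧ (g.cells i).1 ∈ S) <;>
      by_cases hB : (g.cells j).2 < r ∨ ((g.cells j).2 = r ∧ (g.cells j).1 ∈ S) <;>
      simp only [hA, hB, if_pos, if_neg, if_true, if_false]
    · simpa
    · exact le_trans hyle (Nat.le_succ _)
    · -- bad case: i high, j low
      exfalso
      push_neg at hA
      -- from hA and hyle and hB, deduce (g.cells i).2 = r
      have hir : (g.cells i).2 = r := by
        rcases hB with h | ⟨h, _⟩ <;> omega
      have hiS : (g.cells i).1 ∉ S := (hA.2 hir)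
      have hjr : (g.cells j).2 = r := by
        rcases hB with h | ⟨h, _⟩ <;> omega
      have hjS : (g.cells j).1 ∈ S := by
        rcases hB with h | ⟨_, h⟩
        · omega
        · exact h
      have hne : i ≠ j := fun h => absurd hpij (by simp [h])
      rcases lt_or_gt_of_ne hne with hij | hji
      · -- i before j: pattern 12 with cells (i-cell ∉ S, j-cell ∈ S)
        have hxle := hx i j hij
        have hxlt : (g.cells i).1 < (g.cells j).1 := by
          rcases lt_or_eq_of_le hxle with h | h
          · exact h
          · exact absurd (h ▸ hjS) hiS
        apply havoid (gp12 ((g.cells i).1, r) ((g.cells j).1, r))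
        · exact Or.inr ⟨(g.cells j).1, (g.cells i).1, hiS, hjS, hxlt, rfl⟩
        · have := contains_gp12 g i j hij hpij
          rwa [show g.cells i = ((g.cells i).1, r) by rw [← hir],
            show g.cells j = ((g.cells j).1, r) by rw [← hjr]] at this
      · -- j before i: pattern 21 with cells (j-cell ∈ S, i-cell ∉ S)
        have hxle := hx j i hji
        have hxlt : (g.cells j).1 < (g.cells i).1 := by
          rcases lt_or_eq_of_le hxle with h | h
          · exact h
          · exact absurd (h ▸ hiS) (fun hc => hc hjS)
        apply havoid (gp21 ((g.cells j).1, r) ((g.cells i).1, r))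
        · exact Or.inl ⟨(g.cells j).1, (g.cells i).1, hjS, hiS, hxlt, rfl⟩
        · have := contains_gp21 g j i hji hpij
          rwa [show g.cells i = ((g.cells i).1, r) by rw [← hir],
            show g.cells j = ((g.cells j).1, r) by rw [← hjr]] at this
    · exact Nat.succ_le_succ hyle
end

section
/- Fix a row index r ∈ ℕ and a set S ⊆ ℕ of column indices, and let g and h be gridded permutations each avoiding all critical row patterns with respect to r and S. If Γ(h) ≤ Γ(g), then h ≤ g. -/

lemma gammaCell_injective (r : ℕ) (S : Set ℕ) :
    Function.Injective (gammaCell r S) := by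
  intro a b hab
  unfold gammaCell at hab
  split_ifs at hab with h1 h2 h2
  · exact hab
  · obtain ⟨hx, hy⟩ := Prod.ext_iff.mp hab
    push_neg at h2
    rcases h1 with h | ⟨h, _⟩ <;> omega
  · obtain ⟨hx, hy⟩ := Prod.ext_iff.mp hab
    push_neg at h1
    rcases h2 with h | ⟨h, _⟩ <;> omega
  · obtain ⟨hx, hy⟩ := Prod.ext_iff.mp hab
    exact Prod.ext hx (by omega)

/-- If `g` and `h` avoid all critical row patterns and `Γ(h) ≤ Γ(g)`, then
`h ≤ g`. -/
theorem contains_of_rowSep_contains (r : ℕ) (S : Set ℕ) (g h : GP)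
    (hg : g.Consistent) (hh : h.Consistent)
    (hag : AvoidsCrit r S g) (hah : AvoidsCrit r S h)
    (hΓ : (rowSepMap r S g).Contains (rowSepMap r S h)) :
    g.Contains h := by
  obtain ⟨f, hmono, hperm, hcells⟩ := hΓ
  exact ⟨f, hmono, hperm, fun i => gammaCell_injective r S (hcells i)⟩
end
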